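/- arXiv:2005.02975 — 3 statements merged into one kernel-verified Lean document; each statement's English description precedes it below -/
import Mathlib

section
/- The funny tensor product is characterized by an adjunction: the functor − □ C is left adjoint to the functor C ⇒ −, where C ⇒ D is the category whose objects are functors C → D and whose morphisms are arbitrary (not necessarily natural) transformations. -/
open CategoryTheory CategoryTheory.Limits

universe u

/-- The inclusion `D₀ × C₀ → D₀ × C` in `Cat`, where `D₀` is the discrete category
on the objects of `D`. -/
def funnyLeftLeg (D C : Cat.{u, u}) :
    Cat.of (Discrete ↥D × Discrete ↥C) ⟶ Cat.of (Discrete ↥D × ↥C) :=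
  ((𝟭 (Discrete ↥D)).prod (Discrete.functor fun c => (c : ↥C))).toCatHom

/-- The inclusion `D₀ × C₀ → D × C₀` in `Cat`. -/
def funnyRightLeg (D C : Cat.{u, u}) :
    Cat.of (Discrete ↥D × Discrete ↥C) ⟶ Cat.of (↥D × Discrete ↥C) :=
  ((Discrete.functor fun d => (d : ↥D)).prod (𝟭 (Discrete ↥C))).toCatHom

/-- `UnnatCat C D` is the category of functors `C ⥤ D` and arbitrary (not
necessarily natural) transformations: a morphism `F ⟶ G` assigns to every
object `x` of `C` a morphism `F x ⟶ G x`, with no naturality condition. -/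
def UnnatCat (C D : Type u) [Category.{u} C] [Category.{u} D] : Type u :=
  C ⥤ D

instance (C D : Type u) [Category.{u} C] [Category.{u} D] :
    Category.{u} (UnnatCat C D) where
  Hom F G := ∀ x : C, (F : C ⥤ D).obj x ⟶ (G : C ⥤ D).obj x
  id F := fun x => 𝟙 _
  comp η θ := fun x => η x ≫ θ x

namespace Funny

variable (D C : Type u) [Category.{u} D] [Category.{u} C]

/-- carrier of the generating quiver of the funny tensor product -/
structure Vert : Type u where
  d : D
  c : C

/-- generating edges -/
inductive Edge : Vert D C → Vert D C → Type u
  | horiz {d d' : D} (f : d ⟶ d') (c : C) : Edge ⟨d, c⟩ ⟨d', c⟩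
  | vert (d : D) {c c' : C} (g : c ⟶ c') : Edge ⟨d, c⟩ ⟨d, c'⟩

instance : Quiver (Vert D C) := ⟨Edge D C⟩

/-- the relations -/
inductive Rel : ∀ ⦃a b : Paths (Vert D C)⦄, (a ⟶ b) → (a ⟶ b) → Prop
  | horiz_id (d : D) (c : C) :
      Rel (Quiver.Hom.toPath (Edge.horiz (𝟙 d) c)) (𝟙 (show Paths (Vert D C) from ⟨d, c⟩))
  | vert_id (d : D) (c : C) :
      Rel (Quiver.Hom.toPath (Edge.vert d (𝟙 c))) (𝟙 (show Paths (Vert D C) from ⟨d, c⟩))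
  | horiz_comp {d d' d'' : D} (f : d ⟶ d') (f' : d' ⟶ d'') (c : C) :
      Rel (Quiver.Hom.toPath (Edge.horiz f c) ≫ Quiver.Hom.toPath (Edge.horiz f' c))
        (Quiver.Hom.toPath (Edge.horiz (f ≫ f') c))
  | vert_comp (d : D) {c c' c'' : C} (g : c ⟶ c') (g' : c' ⟶ c'') :
      Rel (Quiver.Hom.toPath (Edge.vert d g) ≫ Quiver.Hom.toPath (Edge.vert d g'))
        (Quiver.Hom.toPath (Edge.vert d (g ≫ g')))

/-- the funny tensor product `D □ C` -/
instance : Category.{u} (CategoryTheory.Quotient (Rel D C)) := CategoryTheory.Quotient.category _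

def P : Type u := CategoryTheory.Quotient (Rel D C)

instance : Category.{u} (P D C) :=
  inferInstanceAs (Category (CategoryTheory.Quotient (Rel D C)))

variable {D C}

/-- objects -/
def mk (d : D) (c : C) : P D C := ⟨⟨d, c⟩⟩

/-- horizontal generators -/
def hhom {d d' : D} (f : d ⟶ d') (c : C) : mk d c ⟶ mk d' c :=
  (Quotient.functor (Rel D C)).map (Quiver.Hom.toPath (Edge.horiz f c))

/-- vertical generators -/
def vhom (d : D) {c c' : C} (g : c ⟶ c') : mk d c ⟶ mk d c' :=
  (Quotient.functor (Rel D C)).map (Quiver.Hom.toPath (Edge.vert d g))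

@[simp] theorem hhom_id (d : D) (c : C) : hhom (𝟙 d) c = 𝟙 (mk d c) := by
  have := CategoryTheory.Quotient.sound (Rel D C) (Rel.horiz_id d c)
  erw [CategoryTheory.Functor.map_id] at this
  exact this

@[simp] theorem vhom_id (d : D) (c : C) : vhom d (𝟙 c) = 𝟙 (mk d c) := by
  have := CategoryTheory.Quotient.sound (Rel D C) (Rel.vert_id d c)
  erw [CategoryTheory.Functor.map_id] at this
  exact this

@[simp] theorem hhom_comp {d d' d'' : D} (f : d ⟶ d') (f' : d' ⟶ d'') (c : C) :
    hhom f c ≫ hhom f' c = hhom (f ≫ f') c := by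
  have := CategoryTheory.Quotient.sound (Rel D C) (Rel.horiz_comp f f' c)
  erw [CategoryTheory.Functor.map_comp] at this
  exact this

@[simp] theorem vhom_comp (d : D) {c c' c'' : C} (g : c ⟶ c') (g' : c' ⟶ c'') :
    vhom d g ≫ vhom d g' = vhom d (g ≫ g') := by
  have := CategoryTheory.Quotient.sound (Rel D C) (Rel.vert_comp d g g')
  erw [CategoryTheory.Functor.map_comp] at this
  exact this

section
variable {E : Type u} [Category.{u} E]

/-- application of an unnatural transformation -/
def _root_.UnnatCat.app {C' E' : Type u} [Category.{u} C'] [Category.{u} E']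
    {F G : UnnatCat C' E'} (η : F ⟶ G) (x : C') :
    (F : C' ⥤ E').obj x ⟶ (G : C' ⥤ E').obj x := η x

@[simp] theorem _root_.UnnatCat.app_id {C' E' : Type u} [Category.{u} C'] [Category.{u} E']
    (F : UnnatCat C' E') (x : C') : UnnatCat.app (𝟙 F) x = 𝟙 _ := rfl

@[simp] theorem _root_.UnnatCat.app_comp {C' E' : Type u} [Category.{u} C'] [Category.{u} E']
    {F G H : UnnatCat C' E'} (η : F ⟶ G) (θ : G ⟶ H) (x : C') :
    UnnatCat.app (η ≫ θ) x = UnnatCat.app η x ≫ UnnatCat.app θ x := rfl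

theorem _root_.UnnatCat.eqToHom_app {C' E' : Type u} [Category.{u} C'] [Category.{u} E']
    {F G : UnnatCat C' E'} (h : F = G) (x : C') :
    UnnatCat.app (eqToHom h) x =
      eqToHom (congrArg (fun (F : UnnatCat C' E') => (F : C' ⥤ E').obj x) h) := by
  subst h; rfl

/-- the prefunctor on the generating quiver induced by `Φ : D ⥤ UnnatCat C E` -/
def descPre (Φ : D ⥤ UnnatCat C E) : Prefunctor (Vert D C) E where
  obj x := (Φ.obj x.d : C ⥤ E).obj x.c
  map e := match e with
    | Edge.horiz f c => UnnatCat.app (Φ.map f) c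
    | Edge.vert d g => (Φ.obj d : C ⥤ E).map g

theorem descRel (Φ : D ⥤ UnnatCat C E) (x y : Paths (Vert D C)) (f g : x ⟶ y)
    (h : Rel D C f g) : (Paths.lift (descPre Φ)).map f = (Paths.lift (descPre Φ)).map g := by
  rcases h with ⟨d,c⟩ | ⟨d,c⟩ | ⟨f,f',c⟩ | ⟨d,g,g'⟩ <;>
    simp [Paths.lift_toPath, descPre, Φ.map_id, Φ.map_comp]
  · rfl
  · refine ((Φ.obj d : C ⥤ E).map_id c).trans ?_; rfl
  · erw [Functor.map_comp, Paths.lift_toPath, Paths.lift_toPath]; rfl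
  · erw [Functor.map_comp, Paths.lift_toPath, Paths.lift_toPath, Functor.map_comp]; rfl

/-- the functor on the funny tensor product induced by `Φ : D ⥤ UnnatCat C E` -/
def desc (Φ : D ⥤ UnnatCat C E) : P D C ⥤ E :=
  CategoryTheory.Quotient.lift _ (Paths.lift (descPre Φ)) (descRel Φ)

@[simp] theorem desc_obj (Φ : D ⥤ UnnatCat C E) (d : D) (c : C) :
    (desc Φ).obj (mk d c) = (Φ.obj d : C ⥤ E).obj c := rfl

@[simp] theorem desc_hhom (Φ : D ⥤ UnnatCat C E) {d d' : D} (f : d ⟶ d') (c : C) :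
    (desc Φ).map (hhom f c) = UnnatCat.app (Φ.map f) c :=
  (CategoryTheory.Quotient.lift_map_functor_map _ _ _ _).trans (Paths.lift_toPath _ _)

@[simp] theorem desc_vhom (Φ : D ⥤ UnnatCat C E) (d : D) {c c' : C} (g : c ⟶ c') :
    (desc Φ).map (vhom d g) = (Φ.obj d : C ⥤ E).map g :=
  (CategoryTheory.Quotient.lift_map_functor_map _ _ _ _).trans (Paths.lift_toPath _ _)

/-- extensionality for functors out of the funny tensor product -/
theorem hom_ext {F G : P D C ⥤ E}
    (hobj : ∀ (d : D) (c : C), F.obj (mk d c) = G.obj (mk d c))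
    (hh : ∀ {d d' : D} (f : d ⟶ d') (c : C),
      F.map (hhom f c) = eqToHom (hobj d c) ≫ G.map (hhom f c) ≫ eqToHom (hobj d' c).symm)
    (hv : ∀ (d : D) {c c' : C} (g : c ⟶ c'),
      F.map (vhom d g) = eqToHom (hobj d c) ≫ G.map (vhom d g) ≫ eqToHom (hobj d c').symm) :
    F = G := by
  apply CategoryTheory.Quotient.lift_unique'
  have hobj' : (Quotient.functor (Rel D C) ⋙ F).obj = (Quotient.functor (Rel D C) ⋙ G).obj :=
    funext fun x => hobj x.d x.c
  refine Paths.ext_functor hobj' ?_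
  rintro a b (⟨f,c⟩ | ⟨d,g⟩)
  · exact hh f c
  · exact hv d g

/-- the vertical functor at `d` -/
def vFunctor (d : D) : C ⥤ P D C where
  obj c := mk d c
  map g := vhom d g

/-- the unnatural-transformations-valued functor associated to `k : P D C ⥤ E` -/
def toUnnat (k : P D C ⥤ E) : D ⥤ UnnatCat C E where
  obj d := vFunctor d ⋙ k
  map {d d'} f := fun c => k.map (hhom f c)
  map_id d := funext fun c => by
    show k.map (hhom (𝟙 d) c) = 𝟙 _
    rw [hhom_id, k.map_id]
  map_comp {d d' d''} f g := funext fun c => by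
    show k.map (hhom (f ≫ g) c) = k.map (hhom f c) ≫ k.map (hhom g c)
    rw [← hhom_comp, k.map_comp]

/-- the left inclusion of the pushout -/
def pFun : Discrete D × C ⥤ P D C where
  obj x := mk x.1.as x.2
  map {x y} φ := vhom x.1.as φ.2 ≫ eqToHom (by rw [Discrete.eq_of_hom φ.1])
  map_id x := by simp
  map_comp {x y z} φ ψ := by
    obtain ⟨⟨dx⟩, cx⟩ := x; obtain ⟨⟨dy⟩, cy⟩ := y; obtain ⟨⟨dz⟩, cz⟩ := z
    obtain ⟨u', g⟩ := φ; obtain ⟨u'', g'⟩ := ψ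
    have e1 : dx = dy := Discrete.eq_of_hom u'
    have e2 : dy = dz := Discrete.eq_of_hom u''
    subst e1; subst e2
    simp

/-- the right inclusion of the pushout -/
def qFun : D × Discrete C ⥤ P D C where
  obj x := mk x.1 x.2.as
  map {x y} φ := hhom φ.1 x.2.as ≫ eqToHom (by rw [Discrete.eq_of_hom φ.2])
  map_id x := by simp
  map_comp {x y z} φ ψ := by
    obtain ⟨dx, ⟨cx⟩⟩ := x; obtain ⟨dy, ⟨cy⟩⟩ := y; obtain ⟨dz, ⟨cz⟩⟩ := z
    obtain ⟨f, u'⟩ := φ; obtain ⟨f', u''⟩ := ψ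
    have e1 : cx = cy := Discrete.eq_of_hom u'
    have e2 : cy = cz := Discrete.eq_of_hom u''
    subst e1; subst e2
    simp

@[simp] theorem pFun_obj (x : Discrete D × C) :
    (pFun (D := D) (C := C)).obj x = mk x.1.as x.2 := rfl

@[simp] theorem qFun_obj (x : D × Discrete C) :
    (qFun (D := D) (C := C)).obj x = mk x.1 x.2.as := rfl

theorem pFun_map (d : D) {c c' : C} (g : c ⟶ c') :
    (pFun (D := D) (C := C)).map
      ((𝟙 (Discrete.mk d), g) : (Discrete.mk d, c) ⟶ (Discrete.mk d, c')) = vhom d g := by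
  simp [pFun]

theorem qFun_map {d d' : D} (f : d ⟶ d') (c : C) :
    (qFun (D := D) (C := C)).map
      ((f, 𝟙 (Discrete.mk c)) : (d, Discrete.mk c) ⟶ (d', Discrete.mk c)) = hhom f c := by
  simp [qFun]

section Cocone

variable (u : Discrete D × C ⥤ E) (v : D × Discrete C ⥤ E)
  (weq : ∀ (d : D) (c : C), u.obj (Discrete.mk d, c) = v.obj (d, Discrete.mk c))

/-- the column functor of a cocone -/
def colFun (d : D) : C ⥤ E where
  obj c := u.obj (Discrete.mk d, c)
  map {c c'} g := u.map (𝟙 (Discrete.mk d), g)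
  map_id c := u.map_id (Discrete.mk d, c)
  map_comp {c c' c''} g g' := by
    show u.map _ = u.map _ ≫ u.map _
    rw [← u.map_comp, prod_comp]
    simp
    exact u.map_comp (X := (Discrete.mk d, c)) (Prod.mkHom (𝟙 _) g) (Prod.mkHom (𝟙 _) g')

/-- a pushout cocone induces a functor into the category of unnatural transformations -/
def pairToUnnat : D ⥤ UnnatCat C E where
  obj d := colFun u d
  map {d d'} f := fun c =>
    eqToHom (weq d c) ≫ v.map (f, 𝟙 (Discrete.mk c)) ≫ eqToHom (weq d' c).symm
  map_id d := funext fun c => by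
    show eqToHom (weq d c) ≫ v.map (𝟙 d, 𝟙 (Discrete.mk c)) ≫ eqToHom (weq d c).symm = 𝟙 _
    rw [← prod_id', v.map_id]
    simp
  map_comp {d d' d''} f f' := funext fun c => by
    show eqToHom (weq d c) ≫ v.map (f ≫ f', 𝟙 (Discrete.mk c)) ≫ eqToHom (weq d'' c).symm =
      (eqToHom (weq d c) ≫ v.map (f, 𝟙 (Discrete.mk c)) ≫ eqToHom (weq d' c).symm) ≫
        (eqToHom (weq d' c) ≫ v.map (f', 𝟙 (Discrete.mk c)) ≫ eqToHom (weq d'' c).symm)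
    have h2 : v.map (((f, 𝟙 (Discrete.mk c)) : (d, Discrete.mk c) ⟶ (d', Discrete.mk c)) ≫
        ((f', 𝟙 (Discrete.mk c)) : (d', Discrete.mk c) ⟶ (d'', Discrete.mk c))) =
        v.map ((f ≫ f', 𝟙 (Discrete.mk c)) : (d, Discrete.mk c) ⟶ (d'', Discrete.mk c)) := by
      rw [prod_comp]; simp
      exact (v.map_comp _ _).symm
    rw [← h2, v.map_comp]
    simp

/-- the descended functor from the funny tensor product -/
def pairDesc : P D C ⥤ E := desc (pairToUnnat u v weq)

theorem pairDesc_fac_left : pFun ⋙ pairDesc u v weq = u := by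
  refine CategoryTheory.Functor.ext (fun x => rfl) ?_
  rintro ⟨⟨dx⟩, cx⟩ ⟨⟨dy⟩, cy⟩ ⟨u', g⟩
  have e1 : dx = dy := Discrete.eq_of_hom u'
  subst e1
  have hu : u' = 𝟙 (Discrete.mk dx) := Subsingleton.elim _ _
  subst hu
  rw [Functor.comp_map, pFun_map]
  show (desc (pairToUnnat u v weq)).map (vhom dx g) = _
  rw [desc_vhom]
  show u.map _ = _
  simp
  erw [eqToHom_refl, eqToHom_refl, Category.id_comp, Category.comp_id]

theorem pairDesc_fac_right : qFun ⋙ pairDesc u v weq = v := by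
  refine CategoryTheory.Functor.ext (fun x => weq x.1 x.2.as) ?_
  rintro ⟨dx, ⟨cx⟩⟩ ⟨dy, ⟨cy⟩⟩ ⟨f, u'⟩
  have e1 : cx = cy := Discrete.eq_of_hom u'
  subst e1
  have hu : u' = 𝟙 (Discrete.mk cx) := Subsingleton.elim _ _
  subst hu
  rw [Functor.comp_map, qFun_map]
  show (desc (pairToUnnat u v weq)).map (hhom f cx) = _
  rw [desc_hhom]
  show eqToHom _ ≫ v.map _ ≫ eqToHom _ = _
  simp
  rfl

theorem pairDesc_uniq (m : P D C ⥤ E) (h1 : pFun ⋙ m = u) (h2 : qFun ⋙ m = v) :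
    m = pairDesc u v weq := by
  refine hom_ext (fun d c => (Functor.congr_obj h1 (Discrete.mk d, c)).trans rfl) ?_ ?_
  · intro d d' f c
    have h := Functor.congr_hom h2
      ((f, 𝟙 (Discrete.mk c)) : (d, Discrete.mk c) ⟶ (d', Discrete.mk c))
    rw [Functor.comp_map, qFun_map] at h
    erw [h]
    have h' : (pairDesc u v weq).map (hhom f c) =
        eqToHom (weq d c) ≫ v.map (f, 𝟙 (Discrete.mk c)) ≫ eqToHom (weq d' c).symm :=
      desc_hhom _ _ _
    rw [h']
    erw [Category.assoc, Category.assoc, eqToHom_trans_assoc, eqToHom_trans]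
    rfl
  · intro d c c' g
    have h := Functor.congr_hom h1
      ((𝟙 (Discrete.mk d), g) : (Discrete.mk d, c) ⟶ (Discrete.mk d, c'))
    rw [Functor.comp_map, pFun_map] at h
    erw [h]
    have h' : (pairDesc u v weq).map (vhom d g) = u.map (𝟙 (Discrete.mk d), g) :=
      desc_vhom _ _ _
    rw [h']
    rfl

end Cocone

end

end Funny


section MapSec

namespace Funny

variable {D C D' : Type u} [Category.{u} D] [Category.{u} C] [Category.{u} D']

/-- functoriality data of the funny tensor product -/
def mapUnnat (h : D ⥤ D') : D ⥤ UnnatCat C (P D' C) where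
  obj d := vFunctor (h.obj d)
  map {d d'} f := fun c => hhom (h.map f) c
  map_id d := funext fun c => by
    show hhom (h.map (𝟙 d)) c = 𝟙 _
    rw [h.map_id, hhom_id]
  map_comp {d d' d''} f g := funext fun c => by
    show hhom (h.map (f ≫ g)) c = hhom (h.map f) c ≫ hhom (h.map g) c
    rw [h.map_comp, hhom_comp]

/-- functoriality of the funny tensor product -/
def mapP (h : D ⥤ D') : P D C ⥤ P D' C := desc (mapUnnat h)

@[simp] theorem mapP_obj (h : D ⥤ D') (d : D) (c : C) :
    (mapP h).obj (mk d c) = mk (h.obj d) c := rfl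

@[simp] theorem mapP_hhom (h : D ⥤ D') {d d' : D} (f : d ⟶ d') (c : C) :
    (mapP h).map (hhom f c) = hhom (h.map f) c := desc_hhom _ _ _

@[simp] theorem mapP_vhom (h : D ⥤ D') (d : D) {c c' : C} (g : c ⟶ c') :
    (mapP h).map (vhom d g) = vhom (h.obj d) g := desc_vhom _ _ _

/-- postcomposition on categories of unnatural transformations -/
def postU {E E' : Type u} [Category.{u} E] [Category.{u} E'] (k : E ⥤ E') :
    UnnatCat C E ⥤ UnnatCat C E' where
  obj F := (F : C ⥤ E) ⋙ k
  map {F G} η := fun x => k.map (UnnatCat.app η x)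
  map_id F := funext fun x => by
    show k.map (UnnatCat.app (𝟙 F) x) = 𝟙 _
    rw [UnnatCat.app_id, k.map_id]
  map_comp {F G H} η θ := funext fun x => by
    show k.map (UnnatCat.app (η ≫ θ) x) = k.map (UnnatCat.app η x) ≫ k.map (UnnatCat.app θ x)
    rw [UnnatCat.app_comp, k.map_comp]

section AdjLemmas

variable {E E' : Type u} [Category.{u} E] [Category.{u} E']

/-- componentwise criterion for the map condition of functor extensionality into `UnnatCat` -/
theorem unnat_map_eq {B : Type u} [Category.{u} B]
    {Φ Ψ : B ⥤ UnnatCat C E} (hobj : ∀ d, Φ.obj d = Ψ.obj d) {d d' : B} (f : d ⟶ d')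
    (h : ∀ c : C, UnnatCat.app (Φ.map f) c =
      eqToHom (congrArg (fun F : UnnatCat C E => (F : C ⥤ E).obj c) (hobj d)) ≫
        UnnatCat.app (Ψ.map f) c ≫
          eqToHom (congrArg (fun F : UnnatCat C E => (F : C ⥤ E).obj c) (hobj d')).symm) :
    Φ.map f = eqToHom (hobj d) ≫ Ψ.map f ≫ eqToHom (hobj d').symm := by
  refine funext fun c => ?_
  show UnnatCat.app (Φ.map f) c =
    UnnatCat.app (eqToHom (hobj d) ≫ Ψ.map f ≫ eqToHom (hobj d').symm) c
  rw [UnnatCat.app_comp, UnnatCat.app_comp, UnnatCat.eqToHom_app, UnnatCat.eqToHom_app]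
  refine (h c).trans ?_
  congr 1

theorem desc_toUnnat (k : P D C ⥤ E) : desc (toUnnat k) = k := by
  refine hom_ext (fun d c => rfl) ?_ ?_
  · intro d d' f c
    rw [desc_hhom]
    show k.map (hhom f c) = eqToHom _ ≫ k.map (hhom f c) ≫ eqToHom _
    simp
    erw [eqToHom_refl, Category.id_comp]
  · intro d c c' g
    rw [desc_vhom]
    show k.map (vhom d g) = eqToHom _ ≫ k.map (vhom d g) ≫ eqToHom _
    simp
    erw [eqToHom_refl, Category.id_comp]

theorem toUnnat_desc (Φ : D ⥤ UnnatCat C E) : toUnnat (desc Φ) = Φ := by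
  have hobj : ∀ d, (toUnnat (desc Φ)).obj d = Φ.obj d := by
    intro d
    show (vFunctor d ⋙ desc Φ : C ⥤ E) = (Φ.obj d : C ⥤ E)
    refine CategoryTheory.Functor.ext (fun c => rfl) ?_
    intro c c' g
    show (desc Φ).map (vhom d g) = eqToHom _ ≫ _ ≫ eqToHom _
    rw [desc_vhom]
    simp
    erw [eqToHom_refl, Category.id_comp]
  refine CategoryTheory.Functor.ext hobj ?_
  intro d d' f
  refine unnat_map_eq hobj f ?_
  intro c
  show (desc Φ).map (hhom f c) = _
  rw [desc_hhom]
  simp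
  erw [eqToHom_refl, eqToHom_refl, Category.id_comp, Category.comp_id]

theorem desc_precomp (f : D' ⥤ D) (g : D ⥤ UnnatCat C E) :
    desc (f ⋙ g) = mapP f ⋙ desc g := by
  refine hom_ext (fun d c => rfl) ?_ ?_
  · intro d d' a c
    rw [desc_hhom]
    show _ = eqToHom _ ≫ (desc g).map ((mapP f).map (hhom a c)) ≫ eqToHom _
    erw [mapP_hhom, desc_hhom]
    show UnnatCat.app (g.map (f.map a)) c = _
    simp
    erw [eqToHom_refl, Category.id_comp]
  · intro d c c' a
    rw [desc_vhom]
    show _ = eqToHom _ ≫ (desc g).map ((mapP f).map (vhom d a)) ≫ eqToHom _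
    erw [mapP_vhom, desc_vhom]
    show ((g.obj (f.obj d) : UnnatCat C E) : C ⥤ E).map a = _
    simp
    erw [eqToHom_refl, Category.id_comp]

theorem toUnnat_postcomp (k : P D C ⥤ E) (g : E ⥤ E') :
    toUnnat (k ⋙ g) = toUnnat k ⋙ postU g := by
  have hobj : ∀ d, (toUnnat (k ⋙ g)).obj d = (toUnnat k ⋙ postU g).obj d :=
    fun d => (Functor.assoc (vFunctor d) k g).symm
  refine CategoryTheory.Functor.ext hobj ?_
  intro d d' f
  refine unnat_map_eq hobj f ?_
  intro c
  show g.map (k.map (hhom f c)) = eqToHom _ ≫ g.map (k.map (hhom f c)) ≫ eqToHom _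
  simp
  erw [eqToHom_refl, Category.id_comp]

end AdjLemmas

end Funny

end MapSec

section CatLevel

variable (C : Cat.{u, u})

/-- the funny tensor product functor `− □ C` -/
def funnyF : Cat.{u, u} ⥤ Cat.{u, u} where
  obj D := Cat.of (Funny.P ↥D ↥C)
  map {D D'} h := (Funny.mapP h.toFunctor).toCatHom
  map_id D := by
    refine Cat.ext ?_
    dsimp only [Functor.toCatHom_toFunctor, Cat.Hom.id_toFunctor]
    refine Funny.hom_ext (fun d c => rfl) ?_ ?_
    · intro d d' f c
      rw [Funny.mapP_hhom]
      simp
      erw [eqToHom_refl, Category.id_comp]; rfl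
    · intro d c c' g
      rw [Funny.mapP_vhom]
      simp
      erw [eqToHom_refl, Category.id_comp]; rfl
  map_comp {D D' D''} h k := by
    refine Cat.ext ?_
    dsimp only [Functor.toCatHom_toFunctor, Cat.Hom.comp_toFunctor]
    refine Funny.hom_ext (fun d c => rfl) ?_ ?_
    · intro d d' f c
      rw [Funny.mapP_hhom]
      show _ = eqToHom _ ≫ (Funny.mapP k.toFunctor).map ((Funny.mapP h.toFunctor).map (Funny.hhom f c)) ≫ eqToHom _
      erw [Funny.mapP_hhom]
      simp
      erw [eqToHom_refl, eqToHom_refl, Category.id_comp, Category.comp_id]; rfl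
    · intro d c c' g
      rw [Funny.mapP_vhom]
      show _ = eqToHom _ ≫ (Funny.mapP k.toFunctor).map ((Funny.mapP h.toFunctor).map (Funny.vhom d g)) ≫ eqToHom _
      erw [Funny.mapP_vhom]
      simp
      erw [eqToHom_refl, eqToHom_refl, Category.id_comp, Category.comp_id]; rfl

/-- the functor `C ⇒ −` of unnatural transformations -/
def unnatG : Cat.{u, u} ⥤ Cat.{u, u} where
  obj E := Cat.of (UnnatCat ↥C ↥E)
  map {E E'} k := (Funny.postU k.toFunctor).toCatHom
  map_id E := by
    refine Cat.ext ?_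
    refine CategoryTheory.Functor.ext (fun F => Functor.comp_id _) ?_
    intro F G η
    refine Funny.unnat_map_eq (fun F => Functor.comp_id _) η ?_
    intro x
    show (𝟭 ↥E).map (UnnatCat.app η x) = eqToHom _ ≫ UnnatCat.app η x ≫ eqToHom _
    simp
    erw [eqToHom_refl, Category.id_comp]
  map_comp {E E' E''} k l := by
    refine Cat.ext ?_
    refine CategoryTheory.Functor.ext (fun F => (Functor.assoc _ _ _).symm) ?_
    intro F G η
    refine Funny.unnat_map_eq (fun F => (Functor.assoc _ _ _).symm) η ?_
    intro x
    show l.toFunctor.map (k.toFunctor.map (UnnatCat.app η x)) =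
      eqToHom _ ≫ l.toFunctor.map (k.toFunctor.map (UnnatCat.app η x)) ≫ eqToHom _
    simp
    erw [eqToHom_refl, Category.id_comp]

/-- the pushout square exhibiting the funny tensor product -/
theorem funny_isPushout (D : Cat.{u, u}) :
    IsPushout (funnyLeftLeg D C) (funnyRightLeg D C)
      (show Cat.of (Discrete ↥D × ↥C) ⟶ Cat.of (Funny.P ↥D ↥C) from Funny.pFun.toCatHom)
      (show Cat.of (↥D × Discrete ↥C) ⟶ Cat.of (Funny.P ↥D ↥C) from Funny.qFun.toCatHom) := by
  have comm : funnyLeftLeg D C ≫ (show Cat.of (Discrete ↥D × ↥C) ⟶ Cat.of (Funny.P ↥D ↥C) from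
      Funny.pFun.toCatHom) = funnyRightLeg D C ≫ (show Cat.of (↥D × Discrete ↥C) ⟶
      Cat.of (Funny.P ↥D ↥C) from Funny.qFun.toCatHom) := by
    refine Cat.ext ?_
    refine CategoryTheory.Functor.ext (fun x => rfl) ?_
    rintro ⟨⟨dx⟩, ⟨cx⟩⟩ ⟨⟨dy⟩, ⟨cy⟩⟩ ⟨φ, ψ⟩
    have e1 : dx = dy := Discrete.eq_of_hom φ
    have e2 : cx = cy := Discrete.eq_of_hom ψ
    subst e1; subst e2
    have hφ : φ = 𝟙 (Discrete.mk dx) := Subsingleton.elim _ _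
    have hψ : ψ = 𝟙 (Discrete.mk cx) := Subsingleton.elim _ _
    subst hφ; subst hψ
    show Funny.pFun.map ((funnyLeftLeg D C).toFunctor.map _) = _ ≫ Funny.qFun.map ((funnyRightLeg D C).toFunctor.map _) ≫ _
    simp [funnyLeftLeg, funnyRightLeg, ← prod_id]
    erw [Category.id_comp, Category.id_comp]; exact (eqToHom_refl _ _).symm
  refine IsPushout.of_isColimit (PushoutCocone.IsColimit.mk comm
    (fun s => (Funny.pairDesc s.inl.toFunctor s.inr.toFunctor
      (fun d c => Functor.congr_obj (congrArg Cat.Hom.toFunctor s.condition)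
        (Discrete.mk d, Discrete.mk c))).toCatHom)
    (fun s => Cat.ext (Funny.pairDesc_fac_left _ _ _))
    (fun s => Cat.ext (Funny.pairDesc_fac_right _ _ _))
    (fun s m h1 h2 => Cat.ext (Funny.pairDesc_uniq _ _ _ m.toFunctor
      (congrArg Cat.Hom.toFunctor h1) (congrArg Cat.Hom.toFunctor h2))))

/-- the adjunction between the funny tensor product and unnatural transformations -/
def funnyAdj : funnyF C ⊣ unnatG C :=
  Adjunction.mkOfHomEquiv
    { homEquiv := fun D E =>
        { toFun := fun k => (Funny.toUnnat k.toFunctor).toCatHom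
          invFun := fun Φ => (Funny.desc Φ.toFunctor).toCatHom
          left_inv := fun k => Cat.ext (Funny.desc_toUnnat k.toFunctor)
          right_inv := fun Φ => Cat.ext (Funny.toUnnat_desc Φ.toFunctor) }
      homEquiv_naturality_left_symm := fun {D' D E} f g =>
        Cat.ext (Funny.desc_precomp f.toFunctor g.toFunctor)
      homEquiv_naturality_right := fun {D E E'} k g =>
        Cat.ext (Funny.toUnnat_postcomp k.toFunctor g.toFunctor) }

end CatLevel


/-- The funny tensor product `− □ C` (given by the pushout of
`D₀ × C ← D₀ × C₀ → D × C₀` in `Cat`) is left adjoint to the functor `C ⇒ −`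
sending `E` to the category of functors `C ⥤ E` and unnatural transformations. -/
theorem funny_tensor_adjoint_to_unnatural (C : Cat.{u, u}) :
    ∃ F G : Cat.{u, u} ⥤ Cat.{u, u},
      (∀ D : Cat.{u, u},
        ∃ (p : Cat.of (Discrete ↥D × ↥C) ⟶ F.obj D)
          (q : Cat.of (↥D × Discrete ↥C) ⟶ F.obj D),
          IsPushout (funnyLeftLeg D C) (funnyRightLeg D C) p q) ∧
      (∀ E : Cat.{u, u}, G.obj E = Cat.of (UnnatCat ↥C ↥E)) ∧
      Nonempty (F ⊣ G) := by
  exact ⟨funnyF C, unnatG C,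
    fun D => ⟨_, _, funny_isPushout C D⟩,
    fun E => rfl,
    ⟨funnyAdj C⟩⟩
end

section
/- For a semiring S, matrices over S with Kronecker product form a premonoidal category; this premonoidal structure satisfies the interchange law (and is hence monoidal) if and only if S is commutative. -/
open Matrix Kronecker

/-- The category `Mat_S` of matrices over a semiring `S`: objects are natural
numbers and morphisms `n ⟶ m` are `m × n` matrices, with matrix multiplication
as composition. -/
def MatCat (S : Type u) [Semiring S] : Type := ℕ

instance (S : Type u) [Semiring S] : CategoryTheory.Category (MatCat S) where
  Hom (n m : ℕ) := Matrix (Fin m) (Fin n) S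
  id (n : ℕ) := (1 : Matrix (Fin n) (Fin n) S)
  comp {n m k : ℕ} (f : Matrix (Fin m) (Fin n) S) (g : Matrix (Fin k) (Fin m) S) := g * f
  id_comp {n m : ℕ} (f : Matrix (Fin m) (Fin n) S) := Matrix.mul_one f
  comp_id {n m : ℕ} (f : Matrix (Fin m) (Fin n) S) := Matrix.one_mul f
  assoc {n m k l : ℕ} (f : Matrix (Fin m) (Fin n) S) (g : Matrix (Fin k) (Fin m) S)
      (h : Matrix (Fin l) (Fin k) S) := (Matrix.mul_assoc h g f).symm

/-- Left whiskering for the Kronecker tensor: `1ₙ ⊗ B`. -/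
def matWhiskerLeft {S : Type u} [Semiring S] (n : ℕ) {c d : ℕ}
    (B : Matrix (Fin d) (Fin c) S) : Matrix (Fin n × Fin d) (Fin n × Fin c) S :=
  (1 : Matrix (Fin n) (Fin n) S) ⊗ₖ B

/-- Right whiskering for the Kronecker tensor: `A ⊗ 1ₙ`. -/
def matWhiskerRight {S : Type u} [Semiring S] {a b : ℕ}
    (A : Matrix (Fin b) (Fin a) S) (n : ℕ) : Matrix (Fin b × Fin n) (Fin a × Fin n) S :=
  A ⊗ₖ (1 : Matrix (Fin n) (Fin n) S)

/-- Matrices over a semiring `S` with the Kronecker product form a premonoidal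
category: whiskering on either side is functorial.  This premonoidal structure
satisfies the interchange law — and hence is monoidal — if and only if `S` is
commutative. -/
theorem matrices_premonoidal_interchange_iff_comm (S : Type u) [Semiring S] :
    -- whiskering on either side is functorial (binoidal/premonoidal structure)
    (∀ (n c d e : ℕ) (B : Matrix (Fin d) (Fin c) S) (B' : Matrix (Fin e) (Fin d) S),
        matWhiskerLeft n (B' * B) = matWhiskerLeft n B' * matWhiskerLeft n B) ∧
    (∀ (n : ℕ) (c : ℕ), matWhiskerLeft n (1 : Matrix (Fin c) (Fin c) S) = 1) ∧
    (∀ (n a b f : ℕ) (A : Matrix (Fin b) (Fin a) S) (A' : Matrix (Fin f) (Fin b) S),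
        matWhiskerRight (A' * A) n = matWhiskerRight A' n * matWhiskerRight A n) ∧
    (∀ (n a : ℕ), matWhiskerRight (1 : Matrix (Fin a) (Fin a) S) n = 1) ∧
    -- interchange holds iff `S` is commutative
    ((∀ (a b c d : ℕ) (A : Matrix (Fin b) (Fin a) S) (B : Matrix (Fin d) (Fin c) S),
        matWhiskerLeft b B * matWhiskerRight A c =
          matWhiskerRight A d * matWhiskerLeft a B) ↔
      ∀ x y : S, x * y = y * x) := by
  refine ⟨?_, ?_, ?_, ?_, ?_⟩
  · intro n c d e B B'
    ext ⟨i, j⟩ ⟨k, l⟩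
    simp [matWhiskerLeft, Matrix.mul_apply, kroneckerMap_apply, one_apply,
      Fintype.sum_prod_type, ite_mul, mul_ite, Finset.mul_sum]
  · intro n c
    ext ⟨i, j⟩ ⟨k, l⟩
    simp [matWhiskerLeft, kroneckerMap_apply, one_apply, Prod.ext_iff, ite_and]
    split_ifs <;> simp
  · intro n a b f A A'
    ext ⟨i, j⟩ ⟨k, l⟩
    simp [matWhiskerRight, Matrix.mul_apply, kroneckerMap_apply, one_apply,
      Fintype.sum_prod_type, ite_mul, mul_ite, Finset.mul_sum]
  · intro n a
    ext ⟨i, j⟩ ⟨k, l⟩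
    simp [matWhiskerRight, kroneckerMap_apply, one_apply, Prod.ext_iff, ite_and]
    split_ifs <;> simp
  · have key : ∀ (a b c d : ℕ) (A : Matrix (Fin b) (Fin a) S) (B : Matrix (Fin d) (Fin c) S)
        (i : Fin b) (j : Fin d) (m : Fin a) (n : Fin c),
        (matWhiskerLeft b B * matWhiskerRight A c) (i, j) (m, n) = B j n * A i m ∧
        (matWhiskerRight A d * matWhiskerLeft a B) (i, j) (m, n) = A i m * B j n := by
      intro a b c d A B i j m n
      constructor <;>
      simp [matWhiskerLeft, matWhiskerRight, Matrix.mul_apply, kroneckerMap_apply, one_apply,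
        Fintype.sum_prod_type, ite_mul, mul_ite]
    constructor
    · intro h x y
      have := h 1 1 1 1 (Matrix.of fun _ _ => x) (Matrix.of fun _ _ => y)
      have h0 := congrFun (congrFun this (0, 0)) (0, 0)
      rw [(key 1 1 1 1 _ _ 0 0 0 0).1, (key 1 1 1 1 _ _ 0 0 0 0).2] at h0
      simpa using h0.symm
    · intro hcomm a b c d A B
      ext ⟨i, j⟩ ⟨m, n⟩
      rw [(key a b c d A B i j m n).1, (key a b c d A B i j m n).2, hcomm]
end

section
/- In the free monoidal category on a signature, the tensor of two diagrams defined by concatenating box lists and shifting offsets — (f ⊗ g).boxes = f.boxes ++ g.boxes and (f ⊗ g).offsets = f.offsets ++ map (+ length(cod f)) g.offsets — is associative, unital with respect to the empty diagram, and satisfies the interchange law up to the interchanger congruence. -/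
/-- A monoidal signature: generating objects, generating arrows, and domain and
codomain functions into lists of generating objects. -/
structure Sig where
  Ob : Type u
  Ar : Type v
  dom : Ar → List Ob
  cod : Ar → List Ob

/-- A diagram over a monoidal signature: a domain and codomain (lists of
generating objects), a list of boxes and, for each box, an offset (the number of
wires passing to its left). -/
structure Diagram (S : Sig) where
  dom : List S.Ob
  cod : List S.Ob
  boxes : List S.Ar
  offsets : List ℕ

/-- Well-typedness of a list of boxes and offsets between two lists of wires. -/
def Valid (S : Sig) : List S.Ob → List S.Ar → List ℕ → List S.Ob → Prop
  | u, [], offs, v => offs = [] ∧ u = v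
  | u, b :: bs, offs, v =>
    match offs with
    | [] => False
    | o :: os =>
      ∃ pre post : List S.Ob, pre.length = o ∧ u = pre ++ (S.dom b ++ post) ∧
        Valid S (pre ++ (S.cod b ++ post)) bs os v

/-- A diagram is well-typed when its boxes and offsets fit its boundary. -/
def Diagram.Valid' {S : Sig} (d : Diagram S) : Prop :=
  Valid S d.dom d.boxes d.offsets d.cod

/-- Tensor of diagrams: concatenate the box lists and shift the offsets of the
second diagram by the width of the first. -/
def Diagram.tensor {S : Sig} (f g : Diagram S) : Diagram S :=
  ⟨f.dom ++ g.dom, f.cod ++ g.cod, f.boxes ++ g.boxes,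
    f.offsets ++ g.offsets.map (· + f.cod.length)⟩

/-- The empty diagram. -/
def Diagram.empty (S : Sig) : Diagram S := ⟨[], [], [], []⟩

/-- Composition of diagrams (concatenation of boxes and offsets). -/
def Diagram.comp {S : Sig} (f g : Diagram S) : Diagram S :=
  ⟨f.dom, g.cod, f.boxes ++ g.boxes, f.offsets ++ g.offsets⟩

/-- One interchanger step: two adjacent boxes acting on disjoint sets of wires
(the second strictly to the right of the first) are swapped. -/
inductive InterchangeStep (S : Sig) : Diagram S → Diagram S → Prop
  | mk (dom cod : List S.Ob) (pre post : List S.Ar) (preoff postoff : List ℕ)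
      (b c : S.Ar) (i j : ℕ) (h : i + (S.cod b).length ≤ j) :
      InterchangeStep S
        ⟨dom, cod, pre ++ b :: c :: post, preoff ++ i :: j :: postoff⟩
        ⟨dom, cod, pre ++ c :: b :: post,
          preoff ++ (j - (S.cod b).length + (S.dom b).length) :: i :: postoff⟩


lemma valid_len {S : Sig} : ∀ (bs : List S.Ar) (u : List S.Ob) (offs : List ℕ)
    (v : List S.Ob), Valid S u bs offs v → bs.length = offs.length := by
  intro bs
  induction bs with
  | nil => intro u offs v hv; obtain ⟨rfl, rfl⟩ := hv; rfl
  | cons b bs ih =>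
    intro u offs v hv
    cases offs with
    | nil => exact hv.elim
    | cons o os =>
      obtain ⟨pre, post, _, _, hv'⟩ := hv
      simpa using ih _ _ _ hv'

lemma moveOne {S : Sig} (d c : List S.Ob) (b : S.Ar) (i : ℕ) (cs : List S.Ar) :
    ∀ (os : List ℕ), cs.length = os.length →
    (∀ o ∈ os, i + (S.cod b).length ≤ o) →
    ∀ (pre post : List S.Ar) (preoff postoff : List ℕ),
    Relation.EqvGen (InterchangeStep S)
      ⟨d, c, pre ++ b :: (cs ++ post), preoff ++ i :: (os ++ postoff)⟩
      ⟨d, c, (pre ++ cs) ++ b :: post,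
        (preoff ++ os.map (fun o => o - (S.cod b).length + (S.dom b).length))
          ++ i :: postoff⟩ := by
  induction cs with
  | nil =>
    intro os hlen _ pre post preoff postoff
    obtain rfl : os = [] := by simpa using hlen.symm
    simp only [List.nil_append, List.append_nil, List.map_nil]
    exact .refl _
  | cons c' cs ih =>
    intro os hlen hcond pre post preoff postoff
    match os with
    | o :: os =>
      have step : InterchangeStep S
          ⟨d, c, pre ++ b :: c' :: (cs ++ post), preoff ++ i :: o :: (os ++ postoff)⟩
          ⟨d, c, pre ++ c' :: b :: (cs ++ post),
            preoff ++ (o - (S.cod b).length + (S.dom b).length) :: i :: (os ++ postoff)⟩ :=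
        InterchangeStep.mk d c pre (cs ++ post) preoff (os ++ postoff) b c' i o
          (hcond o (by simp))
      refine Relation.EqvGen.trans _ _ _ (Relation.EqvGen.rel _ _ step) ?_
      have := ih os (by simpa using hlen) (fun x hx => hcond x (by simp [hx]))
        (pre ++ [c']) post (preoff ++ [o - (S.cod b).length + (S.dom b).length]) postoff
      simpa [List.append_assoc] using this

lemma moveBlock {S : Sig} (d c : List S.Ob) :
    ∀ (bs : List S.Ar) (u : List S.Ob) (offs : List ℕ) (v : List S.Ob),
    Valid S u bs offs v →
    ∀ (cs : List S.Ar) (os : List ℕ), cs.length = os.length →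
    ∀ (P Q : List S.Ar) (Po Qo : List ℕ),
    Relation.EqvGen (InterchangeStep S)
      ⟨d, c, P ++ bs ++ cs ++ Q, Po ++ offs ++ os.map (· + v.length) ++ Qo⟩
      ⟨d, c, P ++ cs ++ bs ++ Q, Po ++ os.map (· + u.length) ++ offs ++ Qo⟩ := by
  intro bs
  induction bs with
  | nil =>
    intro u offs v hv cs os hlen P Q Po Qo
    obtain ⟨rfl, rfl⟩ := hv
    simp only [List.append_nil, List.nil_append]
    exact .refl _
  | cons b bs ih =>
    intro u offs v hv cs os hlen P Q Po Qo
    cases offs with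
    | nil => exact hv.elim
    | cons i offs =>
      obtain ⟨pre, post, hpre, rfl, hv'⟩ := hv
      -- first move bs past cs, then move b past cs
      have h1 := ih (pre ++ (S.cod b ++ post)) offs v hv' cs os hlen
        (P ++ [b]) Q (Po ++ [i]) Qo
      have hcod : (S.cod b).length ≤ (pre ++ (S.cod b ++ post)).length := by
        simp; omega
      have h2 := moveOne d c b i cs (os.map (· + (pre ++ (S.cod b ++ post)).length))
        (by simpa using hlen)
        (by
          intro o ho
          simp only [List.mem_map] at ho
          obtain ⟨x, _, rfl⟩ := ho
          simp [← hpre]; omega)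
        P (bs ++ Q) Po (offs ++ Qo)
      have hmap : (os.map (· + (pre ++ (S.cod b ++ post)).length)).map
          (fun o => o - (S.cod b).length + (S.dom b).length)
          = os.map (· + (pre ++ (S.dom b ++ post)).length) := by
        rw [List.map_map]
        apply List.map_congr_left
        intro x _
        simp only [Function.comp_apply, List.length_append]
        omega
      rw [hmap] at h2
      refine Relation.EqvGen.trans _
        ⟨d, c, P ++ b :: (cs ++ (bs ++ Q)),
          Po ++ i :: (os.map (· + (pre ++ (S.cod b ++ post)).length) ++ (offs ++ Qo))⟩ _
        ?_ ?_
      · exact (by simpa [List.append_assoc] using h1)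
      · exact (by simpa [List.append_assoc] using h2)

/-- In the free monoidal category on a signature, the tensor of diagrams defined
by concatenating box lists and shifting offsets is associative, unital with
respect to the empty diagram, and satisfies the interchange law up to the
congruence generated by the interchanger relation. -/
theorem diagram_tensor_assoc_unital_interchange {S : Sig}
    (f g h f₁ f₂ g₁ g₂ : Diagram S)
    (hf : f₁.cod = f₂.dom) (hg : g₁.cod = g₂.dom)
    (vf₁ : f₁.Valid') (vf₂ : f₂.Valid') (vg₁ : g₁.Valid') (vg₂ : g₂.Valid') :
    (f.tensor g).tensor h = f.tensor (g.tensor h) ∧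
      f.tensor (Diagram.empty S) = f ∧ (Diagram.empty S).tensor f = f ∧
      Relation.EqvGen (InterchangeStep S)
        ((f₁.comp f₂).tensor (g₁.comp g₂)) ((f₁.tensor g₁).comp (f₂.tensor g₂)) := by
  refine ⟨?_, ?_, ?_, ?_⟩
  · simp [Diagram.tensor, List.append_assoc, List.map_map, Function.comp, add_assoc]
    intro a _
    omega
  · simp [Diagram.tensor, Diagram.empty]
  · simp [Diagram.tensor, Diagram.empty]
  · have hlen := valid_len g₁.boxes _ _ _ vg₁
    have hb := moveBlock (S := S) (f₁.dom ++ g₁.dom) (f₂.cod ++ g₂.cod)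
      f₂.boxes f₂.dom f₂.offsets f₂.cod vf₂ g₁.boxes g₁.offsets hlen
      f₁.boxes g₂.boxes f₁.offsets (g₂.offsets.map (· + f₂.cod.length))
    rw [← hf] at hb
    simp only [Diagram.comp, Diagram.tensor]
    simpa [List.append_assoc, List.map_append] using hb
end
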